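/- Let A be a real N×N matrix, b_0, b_1, …, b_p ∈ ℝ^N, B the N×p matrix whose k-th column is b_{p+1−k}, K the p×p nilpotent matrix with K(i, i+1) = 1 for 1 ≤ i ≤ p−1 and all other entries zero, and τ ∈ ℝ. For a nonzero scalar ν ∈ ℝ, set Ã_ν = [[A, νB], [0, K]] and v_ν = [b_0; (1/ν) e_p] ∈ ℝ^{N+p}, where e_p is the p-th standard basis vector of ℝ^p. Then the first N components of e^{τÃ_ν} v_ν are independent of ν: for every nonzero ν, (e^{τÃ_ν} v_ν)(1:N) = (e^{τÃ_1} v_1)(1:N) = Σ_{j=0}^{p} τ^j φ_j(τA) b_j. -/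

import Mathlib

open Matrix MeasureTheory
open scoped Nat

attribute [local instance] Matrix.normedAddCommGroup Matrix.normedSpace

/-- The matrix `φ`-functions: `φ₀(M) = e^M` and
`φ_k(M) = ∫_0^1 e^{(1-θ)M} θ^{k-1}/(k-1)! dθ` for `k ≥ 1`. -/
noncomputable def phi {n : ℕ} (k : ℕ) (M : Matrix (Fin n) (Fin n) ℝ) :
    Matrix (Fin n) (Fin n) ℝ :=
  if k = 0 then NormedSpace.exp M
  else ∫ θ in (0:ℝ)..1, ((θ ^ (k - 1) / (k - 1)! : ℝ)) • NormedSpace.exp ((1 - θ) • M)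


/-- The `p × p` nilpotent matrix with `K(i, i+1) = 1` and all other entries zero. -/
noncomputable def Ktilde (p : ℕ) : Matrix (Fin p) (Fin p) ℝ :=
  Matrix.of fun i j => if (j : ℕ) = (i : ℕ) + 1 then 1 else 0

/-- The `N × p` matrix whose `k`-th column is `b_{p+1-k}`, i.e. `B = [b_p, …, b_2, b_1]`. -/
noncomputable def Bmat {N : ℕ} (p : ℕ) (b : ℕ → Fin N → ℝ) : Matrix (Fin N) (Fin p) ℝ :=
  Matrix.of fun i j => b (p - (j : ℕ)) i

/-- The `p`-th standard basis vector of `ℝ^p` (last coordinate equal to one). -/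
noncomputable def ep (p : ℕ) : Fin p → ℝ := fun i => if (i : ℕ) = p - 1 then 1 else 0

/-! ### Auxiliary lemmas -/

open intervalIntegral in
lemma beta_nat (c a : ℕ) :
    ∫ x in (0:ℝ)..1, x ^ a * (1 - x) ^ c = (a ! * c ! : ℝ) / (a + c + 1)! := by
  induction c generalizing a with
  | zero =>
    simp only [pow_zero, mul_one, integral_pow, one_pow, Nat.factorial]
    push_cast [Nat.factorial_succ]
    field_simp
    simp
  | succ c ih =>
    have hd : ∀ x ∈ Set.uIcc (0:ℝ) 1, HasDerivAt
        (fun x : ℝ => x ^ (a+1) * (1-x) ^ (c+1) / (a+1))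
        ((x ^ a * (1-x) ^ (c+1) - ((c+1:ℝ)/(a+1)) * (x ^ (a+1) * (1-x) ^ c))) x := by
      intro x _
      have h1 : HasDerivAt (fun x : ℝ => x ^ (a+1)) ((a+1 : ℝ) * x ^ a) x := by
        simpa using hasDerivAt_pow (a+1) x
      have h2 : HasDerivAt (fun x : ℝ => (1-x) ^ (c+1)) (-((c+1:ℝ) * (1-x) ^ c)) x := by
        have := ((hasDerivAt_pow (c+1) (1-x)).comp x ((hasDerivAt_id x).const_sub 1))
        simpa [Function.comp_def] using this
      have := (h1.mul h2).div_const ((a:ℝ)+1)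
      refine this.congr_deriv ?_
      have ha : ((a:ℝ)+1) ≠ 0 := by positivity
      field_simp
      ring
    have hint : ∀ (u v : ℕ), IntervalIntegrable (fun x : ℝ => x ^ u * (1-x) ^ v) volume 0 1 := by
      intro u v
      exact (Continuous.mul (continuous_pow u)
        ((continuous_const.sub continuous_id).pow v)).intervalIntegrable 0 1
    have hint2 : IntervalIntegrable
        (fun y : ℝ => ((c:ℝ)+1)/((a:ℝ)+1) * (y ^ (a+1) * (1-y) ^ c)) volume 0 1 :=
      (hint (a+1) c).const_mul _
    have key := integral_eq_sub_of_hasDerivAt hd ((hint a (c+1)).sub hint2)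
    rw [integral_sub (hint a (c+1)) hint2, intervalIntegral.integral_const_mul, ih (a+1)] at key
    norm_num at key
    have : (∫ x in (0:ℝ)..1, x ^ a * (1-x) ^ (c+1))
        = ((c+1:ℝ)/(a+1)) * ((a+1)! * c ! / (a+1+c+1)!) := by linarith [key]
    rw [this]
    have h1 : ((a+1)! : ℝ) = (a+1) * a ! := by push_cast [Nat.factorial_succ]; ring
    have h2 : ((c+1)! : ℝ) = (c+1) * c ! := by push_cast [Nat.factorial_succ]; ring
    have h3 : (a + (c+1) + 1) = (a + 1 + c + 1) := by ring
    rw [h3, h1, h2]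
    have ha : ((a:ℝ)+1) ≠ 0 := by positivity
    have hf : ((a+1+c+1)! : ℝ) ≠ 0 := by positivity
    field_simp

lemma entry_bound {m : Type*} [Fintype m] [DecidableEq m] (M : Matrix m m ℝ) :
    ∀ (n : ℕ) (i j : m), |(M ^ n) i j| ≤ ((Fintype.card m : ℝ) * ‖M‖ + 1) ^ n := by
  intro n
  induction n with
  | zero =>
    intro i j
    simp only [pow_zero, Matrix.one_apply]
    split <;> simp
  | succ n ih =>
    intro i j
    rw [pow_succ, Matrix.mul_apply]
    calc |∑ k, (M ^ n) i k * M k j| ≤ ∑ k, |(M ^ n) i k * M k j| :=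
          Finset.abs_sum_le_sum_abs _ _
      _ ≤ ∑ _k : m, ((Fintype.card m : ℝ) * ‖M‖ + 1) ^ n * ‖M‖ := by
          refine Finset.sum_le_sum fun k _ => ?_
          rw [abs_mul]
          have h1 := ih i k
          have h2 : |M k j| ≤ ‖M‖ := by
            simpa [Real.norm_eq_abs] using
              Matrix.norm_entry_le_entrywise_sup_norm M (i := k) (j := j)
          exact mul_le_mul h1 h2 (abs_nonneg _) (by positivity)
      _ ≤ ((Fintype.card m : ℝ) * ‖M‖ + 1) ^ (n + 1) := by
          rw [Finset.sum_const, Finset.card_univ, pow_succ, nsmul_eq_mul]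
          have hM : (0:ℝ) ≤ ‖M‖ := norm_nonneg _
          have hDn : (0:ℝ) ≤ ((Fintype.card m : ℝ) * ‖M‖ + 1) ^ n := by positivity
          have : (Fintype.card m : ℝ) * ‖M‖ ≤ (Fintype.card m : ℝ) * ‖M‖ + 1 := by linarith
          calc (Fintype.card m : ℝ) * (((Fintype.card m : ℝ) * ‖M‖ + 1) ^ n * ‖M‖)
              = ((Fintype.card m : ℝ) * ‖M‖ + 1) ^ n * ((Fintype.card m : ℝ) * ‖M‖) := by
                push_cast; ring
            _ ≤ ((Fintype.card m : ℝ) * ‖M‖ + 1) ^ n * ((Fintype.card m : ℝ) * ‖M‖ + 1) :=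
                mul_le_mul_of_nonneg_left this hDn

lemma matrix_norm_pow_le {m : Type*} [Fintype m] [DecidableEq m] (M : Matrix m m ℝ) (n : ℕ) :
    ‖M ^ n‖ ≤ ((Fintype.card m : ℝ) * ‖M‖ + 1) ^ n := by
  rw [Matrix.norm_le_iff (by positivity)]
  intro i j
  simpa [Real.norm_eq_abs] using entry_bound M n i j

lemma summable_entry {m : Type*} [Fintype m] [DecidableEq m] (M : Matrix m m ℝ) (j : ℕ)
    (i k : m) :
    Summable (fun n : ℕ => (((n + j)! : ℝ))⁻¹ * (M ^ n) i k) := by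
  have hD : Summable fun n : ℕ => ((Fintype.card m : ℝ) * ‖M‖ + 1) ^ n / n ! :=
    Real.summable_pow_div_factorial _
  refine Summable.of_abs (Summable.of_nonneg_of_le (fun n => abs_nonneg _) (fun n => ?_) hD)
  rw [abs_mul, abs_inv, abs_of_nonneg (by positivity : (0:ℝ) ≤ ((n+j)! : ℝ))]
  have h1 : ((n ! : ℝ))⁻¹ ≥ (((n+j)! : ℝ))⁻¹ := by
    apply inv_anti₀ (by positivity)
    exact_mod_cast Nat.factorial_le (Nat.le_add_right n j)
  have h2 : |(M ^ n) i k| ≤ ((Fintype.card m : ℝ) * ‖M‖ + 1) ^ n := entry_bound M n i k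
  calc (((n+j)! : ℝ))⁻¹ * |(M ^ n) i k|
      ≤ ((n ! : ℝ))⁻¹ * ((Fintype.card m : ℝ) * ‖M‖ + 1) ^ n :=
        mul_le_mul h1 h2 (abs_nonneg _) (by positivity)
    _ = ((Fintype.card m : ℝ) * ‖M‖ + 1) ^ n / n ! := by rw [div_eq_inv_mul]

lemma summable_matrix {m : Type*} [Fintype m] [DecidableEq m] (j : ℕ) (M : Matrix m m ℝ) :
    Summable (fun n : ℕ => (((n + j)! : ℝ))⁻¹ • M ^ n) := by
  refine ⟨Matrix.of fun i k => ∑' n : ℕ, (((n + j)! : ℝ))⁻¹ * (M ^ n) i k, ?_⟩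
  refine Pi.hasSum.mpr fun i => ?_; refine Pi.hasSum.mpr fun k => ?_
  simpa [Matrix.smul_apply, smul_eq_mul] using (summable_entry M j i k).hasSum

lemma exp_hasSum {m : Type*} [Fintype m] [DecidableEq m] (M : Matrix m m ℝ) :
    HasSum (fun n : ℕ => ((n ! : ℝ))⁻¹ • M ^ n) (NormedSpace.exp M) := by
  have hs := summable_matrix 0 M
  simp only [Nat.add_zero] at hs
  rw [congrFun (NormedSpace.exp_eq_tsum ℝ) M]
  exact hs.hasSum

lemma phi_hasSum {d : ℕ} (j : ℕ) (M : Matrix (Fin d) (Fin d) ℝ) :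
    HasSum (fun n : ℕ => (((n + j)! : ℝ))⁻¹ • M ^ n) (phi j M) := by
  cases j with
  | zero => simpa [phi] using exp_hasSum M
  | succ m =>
    set D : ℝ := (Fintype.card (Fin d) : ℝ) * ‖M‖ + 1 with hD
    set F : ℕ → ℝ → Matrix (Fin d) (Fin d) ℝ :=
      fun n θ => ((θ ^ m * (1 - θ) ^ n) / (m ! * n !)) • M ^ n with hF
    have hFcont : ∀ n, Continuous (F n) := by
      intro n
      exact (((continuous_pow m).mul ((continuous_const.sub continuous_id).pow n)).div_const
        _).smul continuous_const
    letI : ContinuousENorm (Matrix (Fin d) (Fin d) ℝ) :=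
      @SeminormedAddGroup.toContinuousENorm _ (Matrix.seminormedAddCommGroup).toSeminormedAddGroup
    have hFint : ∀ n, IntegrableOn (F n) (Set.Ioc (0:ℝ) 1) volume :=
      fun n => (hFcont n).integrableOn_Ioc
    have hnorm : ∀ (n : ℕ) (θ : ℝ), θ ∈ Set.Ioc (0:ℝ) 1 → ‖F n θ‖ ≤ D ^ n / n ! := by
      intro n θ hθ
      obtain ⟨h0, h1⟩ := hθ
      have hθ0 : (0:ℝ) ≤ θ := le_of_lt h0
      have h1θ : (0:ℝ) ≤ 1 - θ := by linarith
      rw [hF, norm_smul, Real.norm_eq_abs]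
      have hsc : |θ ^ m * (1 - θ) ^ n / (m ! * n !)| ≤ (n ! : ℝ)⁻¹ := by
        rw [abs_div, abs_mul, abs_of_nonneg (by positivity : (0:ℝ) ≤ (m ! : ℝ) * n !),
          abs_of_nonneg (by positivity : (0:ℝ) ≤ θ ^ m), abs_of_nonneg (by positivity)]
        have hθm : θ ^ m ≤ 1 := pow_le_one₀ hθ0 h1
        have h1θn : (1 - θ) ^ n ≤ 1 := pow_le_one₀ h1θ (by linarith)
        have hm1 : (1:ℝ) ≤ (m ! : ℝ) := by
          exact_mod_cast Nat.one_le_iff_ne_zero.mpr m.factorial_ne_zero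
        have hn0 : (0:ℝ) < (n ! : ℝ) := by positivity
        calc θ ^ m * (1 - θ) ^ n / ((m !:ℝ) * n !) ≤ 1 * 1 / (1 * n !) := by
              apply div_le_div₀ (by norm_num)
                (mul_le_mul hθm h1θn (by positivity) zero_le_one)
                (by positivity) (by nlinarith)
          _ = (n ! : ℝ)⁻¹ := by rw [one_mul, one_mul, inv_eq_one_div]
      calc |θ ^ m * (1 - θ) ^ n / (m ! * n !)| * ‖M ^ n‖ ≤ (n ! : ℝ)⁻¹ * D ^ n :=
            mul_le_mul hsc (matrix_norm_pow_le M n) (norm_nonneg _) (by positivity)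
        _ = D ^ n / n ! := by rw [div_eq_inv_mul]
    have hintnorm : ∀ n : ℕ, (∫ θ in Set.Ioc (0:ℝ) 1, ‖F n θ‖) ≤ D ^ n / n ! := by
      intro n
      have hle := setIntegral_mono_on (hFint n).norm
        (integrableOn_const (by simp))
        measurableSet_Ioc (hnorm n)
      calc (∫ θ in Set.Ioc (0:ℝ) 1, ‖F n θ‖) ≤ ∫ _θ in Set.Ioc (0:ℝ) 1, D ^ n / n ! := hle
        _ = D ^ n / n ! := by simp [Real.volume_Ioc]
    have hsummable : Summable (fun n : ℕ => ∫ θ in Set.Ioc (0:ℝ) 1, ‖F n θ‖) := by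
      refine Summable.of_nonneg_of_le (fun n => ?_) hintnorm (Real.summable_pow_div_factorial D)
      exact integral_nonneg fun θ => norm_nonneg _
    have key := hasSum_integral_of_summable_integral_norm hFint hsummable
    have hptwise : ∀ θ : ℝ, HasSum (fun n => F n θ)
        ((θ ^ m / m !) • NormedSpace.exp ((1 - θ) • M)) := by
      intro θ
      have h := (exp_hasSum ((1 - θ) • M)).const_smul (θ ^ m / (m ! : ℝ))
      have he : (fun n : ℕ => (θ ^ m / (m ! : ℝ)) • (((n ! : ℝ))⁻¹ • ((1 - θ) • M) ^ n))
          = fun n => F n θ := by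
        funext n
        rw [hF]
        simp only
        rw [smul_pow, smul_smul, smul_smul]
        congr 1
        ring
      exact he ▸ h
    have htsum : (fun θ : ℝ => ∑' n, F n θ)
        = fun θ : ℝ => (θ ^ m / m !) • NormedSpace.exp ((1 - θ) • M) :=
      funext fun θ => (hptwise θ).tsum_eq
    erw [htsum] at key
    have hval : ∀ n : ℕ, (∫ θ in Set.Ioc (0:ℝ) 1, F n θ) = (((n + (m+1))! : ℝ))⁻¹ • M ^ n := by
      intro n
      rw [hF]
      simp only
      rw [integral_smul_const]
      congr 1
      rw [integral_div]
      rw [← intervalIntegral.integral_of_le (by norm_num : (0:ℝ) ≤ 1), beta_nat n m]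
      have h1 : ((m + n + 1)! : ℝ) ≠ 0 := by positivity
      have h2 : ((m !:ℝ)) ≠ 0 := by positivity
      have h3 : ((n !:ℝ)) ≠ 0 := by positivity
      have he : (n + (m + 1)) = (m + n + 1) := by ring
      rw [he]
      field_simp
    have hphi : phi (m+1) M
        = ∫ θ in Set.Ioc (0:ℝ) 1, (θ ^ m / m !) • NormedSpace.exp ((1 - θ) • M) := by
      rw [phi]
      simp only [Nat.succ_ne_zero, if_false, Nat.add_sub_cancel]
      rw [intervalIntegral.integral_of_le (by norm_num : (0:ℝ) ≤ 1)]
    rw [hphi]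
    exact (funext hval : (fun n => ∫ θ in Set.Ioc (0:ℝ) 1, F n θ) = _) ▸ key

/-- The vector `K^n e_p`. -/
noncomputable def wvec (p n : ℕ) : Fin p → ℝ := fun i => if (i : ℕ) + n = p - 1 then 1 else 0

/-- The top block of `M̃^n v`. -/
noncomputable def uvec {N : ℕ} (p : ℕ) (A : Matrix (Fin N) (Fin N) ℝ) (b : ℕ → Fin N → ℝ)
    (n : ℕ) : Fin N → ℝ :=
  ∑ j ∈ Finset.range (p + 1), if j ≤ n then (A ^ (n - j)).mulVec (b j) else 0

lemma Ktilde_mulVec_wvec {p : ℕ} (hp : 0 < p) (n : ℕ) :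
    (Ktilde p).mulVec (wvec p n) = wvec p (n + 1) := by
  funext i
  simp only [Matrix.mulVec, dotProduct, Ktilde, Matrix.of_apply, wvec,
    ite_mul, one_mul, zero_mul]
  by_cases hi : (i : ℕ) + 1 < p
  · rw [Finset.sum_eq_single (⟨(i : ℕ) + 1, hi⟩ : Fin p)]
    · simp only [if_true]
      rw [show (i : ℕ) + 1 + n = (i : ℕ) + (n + 1) from by omega]
    · intro j _ hj
      rw [if_neg]
      intro hc
      exact hj (Fin.ext hc)
    · simp
  · rw [Finset.sum_eq_zero, eq_comm, if_neg]
    · omega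
    · intro j _
      rw [if_neg]
      omega

lemma Bmat_mulVec_wvec {N p : ℕ} (hp : 0 < p) (b : ℕ → Fin N → ℝ) (n : ℕ) :
    (Bmat p b).mulVec (wvec p n) = if n + 1 ≤ p then b (n + 1) else 0 := by
  funext i
  simp only [Matrix.mulVec, dotProduct, Bmat, Matrix.of_apply, wvec,
    mul_ite, mul_one, mul_zero]
  by_cases hn : n + 1 ≤ p
  · rw [Finset.sum_eq_single (⟨p - 1 - n, by omega⟩ : Fin p)]
    · rw [if_pos (by simp; omega), if_pos hn]
      congr 1
      simp
      omega
    · intro j _ hj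
      rw [if_neg]
      intro hc
      apply hj (Fin.ext ?_)
      simp
      omega
    · simp
  · rw [Finset.sum_eq_zero, eq_comm, if_neg hn]
    · rfl
    · intro j _
      rw [if_neg]
      omega

lemma uvec_succ {N p : ℕ} (A : Matrix (Fin N) (Fin N) ℝ) (b : ℕ → Fin N → ℝ) (n : ℕ) :
    uvec p A b (n + 1) = A.mulVec (uvec p A b n) + (if n + 1 ≤ p then b (n + 1) else 0) := by
  have hAu : A.mulVec (uvec p A b n)
      = ∑ j ∈ Finset.range (p + 1), if j ≤ n then (A ^ (n + 1 - j)).mulVec (b j) else 0 := by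
    rw [uvec, show A.mulVec = A.mulVecLin from rfl, map_sum]
    refine Finset.sum_congr rfl fun j _ => ?_
    by_cases hj : j ≤ n
    · rw [if_pos hj, if_pos hj, show n + 1 - j = (n - j) + 1 from by omega]
      show A.mulVec ((A ^ (n - j)).mulVec (b j)) = _
      rw [Matrix.mulVec_mulVec, ← pow_succ']
    · rw [if_neg hj, if_neg hj, map_zero]
  rw [hAu, uvec]
  have hsplit : ∀ j ∈ Finset.range (p + 1),
      (if j ≤ n + 1 then (A ^ (n + 1 - j)).mulVec (b j) else 0)
      = (if j ≤ n then (A ^ (n + 1 - j)).mulVec (b j) else 0)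
        + (if j = n + 1 then (A ^ (n + 1 - j)).mulVec (b j) else 0) := by
    intro j _
    by_cases h1 : j ≤ n
    · rw [if_pos (by omega), if_pos h1, if_neg (by omega), add_zero]
    · by_cases h2 : j = n + 1
      · rw [if_pos (by omega), if_neg h1, if_pos h2, zero_add]
      · rw [if_neg (by omega), if_neg h1, if_neg h2, add_zero]
  rw [Finset.sum_congr rfl hsplit, Finset.sum_add_distrib]
  congr 1
  rw [Finset.sum_ite_eq' (Finset.range (p + 1)) (n + 1)
    (fun j => (A ^ (n + 1 - j)).mulVec (b j))]
  by_cases h : n + 1 ≤ p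
  · rw [if_pos (by simp; omega), if_pos h, Nat.sub_self, pow_zero, Matrix.one_mulVec]
  · rw [if_neg (by simp; omega), if_neg h]

lemma pow_mulVec {N p : ℕ} (hp : 0 < p) (A : Matrix (Fin N) (Fin N) ℝ)
    (b : ℕ → Fin N → ℝ) (ν : ℝ) (hν : ν ≠ 0) (n : ℕ) :
    ((Matrix.fromBlocks A (ν • Bmat p b) 0 (Ktilde p)) ^ n).mulVec
        (Sum.elim (b 0) ((1 / ν) • ep p))
      = Sum.elim (uvec p A b n) ((1 / ν) • wvec p n) := by
  induction n with
  | zero =>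
    rw [pow_zero, Matrix.one_mulVec]
    have h1 : uvec p A b 0 = b 0 := by
      funext i
      rw [uvec, Finset.sum_eq_single 0]
      · simp
      · intro j _ hj
        rw [if_neg (by omega)]
      · simp
    have h2 : wvec p 0 = ep p := by
      funext i
      simp [ep, wvec]
    rw [h1, h2]
  | succ n ih =>
    rw [pow_succ', ← Matrix.mulVec_mulVec, ih, Matrix.fromBlocks_mulVec]
    simp only [Sum.elim_comp_inl, Sum.elim_comp_inr, Matrix.zero_mulVec, zero_add]
    have hBv : (ν • Bmat p b).mulVec ((1 / ν) • wvec p n) = (Bmat p b).mulVec (wvec p n) := by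
      rw [Matrix.smul_mulVec, Matrix.mulVec_smul, smul_smul, mul_one_div_cancel hν,
        one_smul]
    rw [hBv, uvec_succ, Bmat_mulVec_wvec hp, Matrix.mulVec_smul, Ktilde_mulVec_wvec hp]

lemma hasSum_mulVec_apply {m n : Type*} [Fintype m] [Fintype n]
    {f : ℕ → Matrix m n ℝ} {g : Matrix m n ℝ}
    (h : HasSum f g) (v : n → ℝ) (i : m) :
    HasSum (fun q => (f q).mulVec v i) (g.mulVec v i) := by
  simp only [Matrix.mulVec, dotProduct]
  exact hasSum_sum fun k _ => ((Pi.hasSum.mp (Pi.hasSum.mp h i)) k).mul_right (v k)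

lemma main_identity {N p : ℕ} (hp : 0 < p) (A : Matrix (Fin N) (Fin N) ℝ)
    (b : ℕ → Fin N → ℝ) (τ : ℝ) (ν : ℝ) (hν : ν ≠ 0) (i : Fin N) :
    (NormedSpace.exp
          (τ • Matrix.fromBlocks A (ν • Bmat p b) 0 (Ktilde p))).mulVec
        (Sum.elim (b 0) ((1 / ν) • ep p)) (Sum.inl i)
      = ∑ j ∈ Finset.range (p + 1), (τ ^ j • (phi j (τ • A)).mulVec (b j)) i := by
  set Mt : Matrix (Fin N ⊕ Fin p) (Fin N ⊕ Fin p) ℝ :=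
    Matrix.fromBlocks A (ν • Bmat p b) 0 (Ktilde p) with hMt
  set v : (Fin N ⊕ Fin p) → ℝ := Sum.elim (b 0) ((1 / ν) • ep p) with hv
  -- the series for the left-hand side
  have hexp := hasSum_mulVec_apply (exp_hasSum (τ • Mt)) v (Sum.inl i)
  have hterm : (fun q : ℕ => (((q ! : ℝ))⁻¹ • (τ • Mt) ^ q).mulVec v (Sum.inl i))
      = fun q : ℕ => ((q ! : ℝ))⁻¹ * (τ ^ q * uvec p A b q i) := by
    funext q
    rw [smul_pow, Matrix.smul_mulVec, Matrix.smul_mulVec, hv, hMt,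
      pow_mulVec hp A b ν hν q]
    simp [smul_eq_mul]
  rw [hterm] at hexp
  -- the series for the right-hand side
  have hrhs : ∀ j ∈ Finset.range (p + 1),
      HasSum (fun q : ℕ => if j ≤ q then ((q ! : ℝ))⁻¹ * (τ ^ q * ((A ^ (q - j)).mulVec (b j) i))
        else 0)
      ((τ ^ j • (phi j (τ • A)).mulVec (b j)) i) := by
    intro j _
    have h1 := (hasSum_mulVec_apply (phi_hasSum j (τ • A)) (b j) i).mul_left (τ ^ j)
    have h2 : (fun q : ℕ => τ ^ j * ((((q + j)! : ℝ))⁻¹ • (τ • A) ^ q).mulVec (b j) i)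
        = fun q : ℕ => (if j ≤ q + j then ((((q + j)! : ℝ))⁻¹ * (τ ^ (q + j)
            * ((A ^ ((q + j) - j)).mulVec (b j) i))) else 0) := by
      funext q
      rw [if_pos (Nat.le_add_left j q), Nat.add_sub_cancel, smul_pow,
        Matrix.smul_mulVec, Matrix.smul_mulVec]
      simp only [Pi.smul_apply, smul_eq_mul]
      ring
    rw [h2] at h1
    have h3 : (τ ^ j • (phi j (τ • A)).mulVec (b j)) i
        = τ ^ j * ((phi j (τ • A)).mulVec (b j) i) := rfl
    rw [h3]
    refine (Function.Injective.hasSum_iff (g := fun q : ℕ => q + j)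
      (add_left_injective j) ?_).mp h1
    intro x hx
    rw [if_neg]
    intro hc
    exact hx ⟨x - j, Nat.sub_add_cancel hc⟩
  have hsum := hasSum_sum hrhs
  have hfun : (fun q : ℕ => ∑ j ∈ Finset.range (p + 1),
        if j ≤ q then ((q ! : ℝ))⁻¹ * (τ ^ q * ((A ^ (q - j)).mulVec (b j) i)) else 0)
      = fun q : ℕ => ((q ! : ℝ))⁻¹ * (τ ^ q * uvec p A b q i) := by
    funext q
    rw [uvec, Finset.sum_apply, Finset.mul_sum, Finset.mul_sum]
    refine Finset.sum_congr rfl fun j _ => ?_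
    by_cases h : j ≤ q <;> simp [h]
  rw [hfun] at hsum
  exact hexp.unique hsum

theorem stmt14 {N p : ℕ} (hp : 0 < p) (A : Matrix (Fin N) (Fin N) ℝ)
    (b : ℕ → Fin N → ℝ) (τ : ℝ) :
    ∀ ν : ℝ, ν ≠ 0 → ∀ i : Fin N,
      (NormedSpace.exp
            (τ • Matrix.fromBlocks A (ν • Bmat p b) 0 (Ktilde p))).mulVec
          (Sum.elim (b 0) ((1 / ν) • ep p)) (Sum.inl i)
        = (NormedSpace.exp
              (τ • Matrix.fromBlocks A ((1 : ℝ) • Bmat p b) 0 (Ktilde p))).mulVec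
            (Sum.elim (b 0) ((1 / (1 : ℝ)) • ep p)) (Sum.inl i) ∧
      (NormedSpace.exp
            (τ • Matrix.fromBlocks A (ν • Bmat p b) 0 (Ktilde p))).mulVec
          (Sum.elim (b 0) ((1 / ν) • ep p)) (Sum.inl i)
        = ∑ j ∈ Finset.range (p + 1), (τ ^ j • (phi j (τ • A)).mulVec (b j)) i := by
  intro ν hν i
  refine ⟨?_, main_identity hp A b τ ν hν i⟩
  rw [main_identity hp A b τ ν hν i, main_identity hp A b τ 1 one_ne_zero i]
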